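/- Let X be a compact metrizable Hausdorff space and let f : X → [0,∞] be a lower semicontinuous function which is the pointwise supremum of an increasing net (f_α) of lower semicontinuous functions f_α : X → [0,∞]. Then f is the pointwise supremum of some increasing sequence extracted from the net, i.e., there exist indices α₁ ≤ α₂ ≤ ⋯ such that f(x) = sup_i f_{α_i}(x) for all x ∈ X. -/
import Mathlib

open scoped ENNReal

open TopologicalSpace Set

/-- If `F : X → [0,∞]` on a compact metrizable space is lower semicontinuous and is the
pointwise supremum of an increasing net of lower semicontinuous functions, then `F` is the
pointwise supremum of an increasing sequence extracted from the net. -/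
theorem stmt_0 {X : Type*} [TopologicalSpace X] [CompactSpace X] [T2Space X]
    [TopologicalSpace.MetrizableSpace X]
    {ι : Type*} [Preorder ι] [Nonempty ι] [IsDirected ι (· ≤ ·)]
    (f : ι → X → ℝ≥0∞) (F : X → ℝ≥0∞)
    (hF : LowerSemicontinuous F)
    (hf : ∀ α, LowerSemicontinuous (f α))
    (hmono : Monotone f)
    (hsup : ∀ x, F x = ⨆ α, f α x) :
    ∃ φ : ℕ → ι, Monotone φ ∧ ∀ x, F x = ⨆ i, f (φ i) x := by
  letI : MetricSpace X := TopologicalSpace.metrizableSpaceMetric X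
  classical
  -- the countable basis
  set B := TopologicalSpace.countableBasis X with hB
  -- good pairs: basis set whose closure is inside {F > q}
  set S : Set (Set X × ℚ) :=
    {p | p.1 ∈ B ∧ closure p.1 ⊆ {x | (Real.toNNReal p.2 : ℝ≥0∞) < F x}} with hS
  have hScount : S.Countable := by
    have : S ⊆ B ×ˢ (univ : Set ℚ) := fun p hp => ⟨hp.1, trivial⟩
    exact Set.Countable.mono this
      ((countable_countableBasis X).prod (Set.countable_univ))
  -- for every good pair there is a single index working
  have key : ∀ p ∈ S, ∃ α : ι,
      closure p.1 ⊆ {x | (Real.toNNReal p.2 : ℝ≥0∞) < f α x} := by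
    rintro ⟨U, q⟩ ⟨hUB, hUF⟩
    have hcomp : IsCompact (closure U) := isClosed_closure.isCompact
    have hopen : ∀ α : ι, IsOpen {x | (Real.toNNReal q : ℝ≥0∞) < f α x} := fun α =>
      (hf α).isOpen_preimage _
    have hdir : Directed (· ⊆ ·) fun α : ι => {x | (Real.toNNReal q : ℝ≥0∞) < f α x} := by
      intro a b
      obtain ⟨c, hac, hbc⟩ := directed_of (· ≤ ·) a b
      exact ⟨c, fun x hx => lt_of_lt_of_le hx (hmono hac x),
        fun x hx => lt_of_lt_of_le hx (hmono hbc x)⟩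
    have hcover : closure U ⊆ ⋃ α : ι, {x | (Real.toNNReal q : ℝ≥0∞) < f α x} := by
      intro x hx
      have : (Real.toNNReal q : ℝ≥0∞) < F x := hUF hx
      rw [hsup x, lt_iSup_iff] at this
      obtain ⟨α, hα⟩ := this
      exact mem_iUnion.2 ⟨α, hα⟩
    exact hcomp.elim_directed_cover _ hopen hcover hdir
  -- choice of indices
  let β : Set X × ℚ → ι := fun p =>
    if h : p ∈ S then (key p h).choose else Classical.arbitrary ι
  have hβ : ∀ p (h : p ∈ S),
      closure p.1 ⊆ {x | (Real.toNNReal p.2 : ℝ≥0∞) < f (β p) x} := by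
    intro p h
    simp only [β, dif_pos h]
    exact (key p h).choose_spec
  -- enumerate S (with a dummy to ensure nonemptiness)
  obtain ⟨g, hg⟩ : ∃ g : ℕ → Set X × ℚ, insert (∅, (0 : ℚ)) S = Set.range g :=
    (hScount.insert _).exists_eq_range (insert_nonempty _ _)
  have hgS : S ⊆ Set.range g := by rw [← hg]; exact subset_insert _ _
  -- build an increasing sequence dominating all β (g n)
  let u : ι → ι → ι := fun a b => (directed_of (· ≤ ·) a b).choose
  have hu1 : ∀ a b, a ≤ u a b := fun a b => (directed_of (· ≤ ·) a b).choose_spec.1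
  have hu2 : ∀ a b, b ≤ u a b := fun a b => (directed_of (· ≤ ·) a b).choose_spec.2
  let φ : ℕ → ι := fun n => Nat.rec (β (g 0)) (fun n ih => u ih (β (g (n + 1)))) n
  have hφsucc : ∀ n, φ n ≤ φ (n + 1) := fun n => hu1 _ _
  have hφmono : Monotone φ := monotone_nat_of_le_succ hφsucc
  have hβφ : ∀ n, β (g n) ≤ φ n := by
    intro n
    cases n with
    | zero => exact le_refl _
    | succ n => exact hu2 _ _
  refine ⟨φ, hφmono, fun x => ?_⟩
  apply le_antisymm
  · -- F x ≤ ⨆ i, f (φ i) x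
    refine le_of_forall_lt fun a ha => ?_
    obtain ⟨q, hq0, haq, hqF⟩ := ENNReal.lt_iff_exists_rat_btwn.1 ha
    -- x lies in the open set {F > q}; find a basis set with closure inside
    have hopen : IsOpen {y | (Real.toNNReal q : ℝ≥0∞) < F y} := hF.isOpen_preimage _
    have hx : {y | (Real.toNNReal q : ℝ≥0∞) < F y} ∈ nhds x := hopen.mem_nhds hqF
    obtain ⟨U, hUB, hxU, hUcl⟩ :=
      (isBasis_countableBasis X).exists_closure_subset hx
    have hpS : (U, q) ∈ S := ⟨hUB, hUcl⟩
    obtain ⟨n, hn⟩ := hgS hpS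
    have hfx : (Real.toNNReal q : ℝ≥0∞) < f (β (g n)) x := by
      have := hβ (U, q) hpS (subset_closure hxU)
      rw [hn]; exact this
    calc a < (Real.toNNReal q : ℝ≥0∞) := haq
      _ < f (β (g n)) x := hfx
      _ ≤ f (φ n) x := hmono (hβφ n) x
      _ ≤ ⨆ i, f (φ i) x := le_iSup (fun i => f (φ i) x) n
  · -- ⨆ i, f (φ i) x ≤ F x
    refine iSup_le fun i => ?_
    rw [hsup x]
    exact le_iSup (fun α => f α x) (φ i)
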